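/- arXiv:2002.05334 — 2 statements merged into one kernel-verified Lean document; each statement's English description precedes it below -/
import Mathlib

section
/- For θ > max(1 - d/2, 0), n ≥ 0, k ≥ 0 and any degree-n solid harmonic Y, the Müntz-type generalized Hermite function Ĥ(x) = L_k^{(β_n)}(|x|^{2θ}) e^{-|x|^{2θ}/2} Y(x), with β_n = (n + d/2 - 1)/θ, satisfies the generalized eigenvalue identity (-Δ + θ² |x|^{4θ-2}) Ĥ(x) = 2θ² (β_n + 2k + 1) |x|^{2θ-2} Ĥ(x) for x ≠ 0. -/
open MeasureTheory Real

/-- Generalized Laguerre polynomial `L_k^{(α)}(z) = ∑_{j=0}^k (α+j+1)_{k-j}/((k-j)! j!) (-z)^j`. -/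
noncomputable def laguerre (α : ℝ) (k : ℕ) (z : ℝ) : ℝ :=
  ∑ j ∈ Finset.range (k + 1),
    Real.Gamma (α + k + 1) /
      (Real.Gamma (α + j + 1) * ((k - j).factorial : ℝ) * (j.factorial : ℝ)) * (-z) ^ j

/-- The Laplacian of `f : ℝ^d → ℝ`, as the trace of the second derivative. -/
noncomputable def lap {d : ℕ} (f : EuclideanSpace ℝ (Fin d) → ℝ)
    (x : EuclideanSpace ℝ (Fin d)) : ℝ :=
  ∑ i : Fin d, iteratedFDeriv ℝ 2 f x ![EuclideanSpace.single i 1, EuclideanSpace.single i 1]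

/-- Evaluation of a multivariate polynomial as a function on `ℝ^d`. -/
noncomputable def pEval {d : ℕ} (P : MvPolynomial (Fin d) ℝ)
    (x : EuclideanSpace ℝ (Fin d)) : ℝ :=
  MvPolynomial.eval (fun i => x i) P

noncomputable def lagC (α : ℝ) (k j : ℕ) : ℝ :=
  Real.Gamma (α + k + 1) /
    (Real.Gamma (α + j + 1) * ((k - j).factorial : ℝ) * (j.factorial : ℝ))

lemma laguerre_eq (α : ℝ) (k : ℕ) (z : ℝ) :
    laguerre α k z = ∑ j ∈ Finset.range (k + 1), lagC α k j * (-z) ^ j := rfl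

noncomputable def lagD1 (α : ℝ) (k : ℕ) (z : ℝ) : ℝ :=
  ∑ j ∈ Finset.range (k + 1), lagC α k j * (-(j : ℝ)) * (-z) ^ (j - 1)

noncomputable def lagD2 (α : ℝ) (k : ℕ) (z : ℝ) : ℝ :=
  ∑ j ∈ Finset.range (k + 1), lagC α k j * (j : ℝ) * ((j - 1 : ℕ) : ℝ) * (-z) ^ (j - 2)

lemma hasDerivAt_laguerre (α : ℝ) (k : ℕ) (z : ℝ) :
    HasDerivAt (laguerre α k) (lagD1 α k z) z := by
  unfold lagD1
  apply HasDerivAt.fun_sum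
  intro j _
  have h1 : HasDerivAt (fun z : ℝ => -z) (-1) z := (hasDerivAt_id z).neg
  have h2 := (h1.pow j).const_mul (lagC α k j)
  refine h2.congr_deriv ?_
  ring

lemma hasDerivAt_lagD1 (α : ℝ) (k : ℕ) (z : ℝ) :
    HasDerivAt (fun z => lagD1 α k z) (lagD2 α k z) z := by
  unfold lagD1 lagD2
  apply HasDerivAt.fun_sum
  intro j _
  have h1 : HasDerivAt (fun z : ℝ => -z) (-1) z := (hasDerivAt_id z).neg
  have h2 := (h1.pow (j - 1)).const_mul (lagC α k j * (-(j : ℝ)))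
  refine h2.congr_deriv ?_
  rw [Nat.sub_sub]
  ring

lemma lagC_rec (α : ℝ) (hα : -1 < α) (k i : ℕ) (hik : i < k) :
    lagC α k (i + 1) * ((i : ℝ) + 1) * ((i : ℝ) + 1 + α) = lagC α k i * ((k : ℝ) - i) := by
  unfold lagC
  have h1 : (0 : ℝ) < α + i + 1 := by
    have : (0:ℝ) ≤ (i : ℝ) := Nat.cast_nonneg i
    linarith
  have hΓ : Real.Gamma (α + (i + 1 : ℕ) + 1) = (α + i + 1) * Real.Gamma (α + i + 1) := by
    push_cast
    rw [show α + ((i : ℝ) + 1) + 1 = (α + i + 1) + 1 by ring, Real.Gamma_add_one h1.ne']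
  rw [hΓ]
  have hf1 : ((i + 1).factorial : ℝ) = (i + 1) * (i.factorial : ℝ) := by
    rw [Nat.factorial_succ]; push_cast; ring
  have hki : ((k : ℝ) - i) = ((k - i : ℕ) : ℝ) := by
    rw [Nat.cast_sub hik.le]
  have hf2 : ((k - i).factorial : ℝ) = ((k:ℝ) - i) * ((k - (i + 1)).factorial : ℝ) := by
    have h3 : k - i = (k - (i + 1)) + 1 := by omega
    rw [hki, h3, Nat.factorial_succ]
    push_cast
    rfl
  rw [hf1, hf2]
  have hΓ0 : Real.Gamma (α + i + 1) ≠ 0 := (Real.Gamma_pos_of_pos h1).ne'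
  have hfac0 : ((k - (i + 1)).factorial : ℝ) ≠ 0 := Nat.cast_ne_zero.mpr (Nat.factorial_ne_zero _)
  have hifac0 : ((i).factorial : ℝ) ≠ 0 := Nat.cast_ne_zero.mpr (Nat.factorial_ne_zero _)
  have hki0 : (k : ℝ) - i ≠ 0 := by
    have : (i:ℝ) < k := by exact_mod_cast hik
    linarith
  have hi10 : (i : ℝ) + 1 ≠ 0 := by positivity
  field_simp
  ring

lemma laguerre_ode (α : ℝ) (hα : -1 < α) (k : ℕ) (z : ℝ) :
    z * lagD2 α k z + (α + 1 - z) * lagD1 α k z + k * laguerre α k z = 0 := by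
  rw [lagD1, lagD2, laguerre_eq, Finset.mul_sum, Finset.mul_sum, Finset.mul_sum,
    ← Finset.sum_add_distrib, ← Finset.sum_add_distrib]
  have key : ∀ j ∈ Finset.range (k + 1),
      z * (lagC α k j * (j : ℝ) * ((j - 1 : ℕ) : ℝ) * (-z) ^ (j - 2)) +
        (α + 1 - z) * (lagC α k j * (-(j : ℝ)) * (-z) ^ (j - 1)) +
          (k : ℝ) * (lagC α k j * (-z) ^ j) =
      (-(lagC α k j * (j : ℝ) * ((j : ℝ) + α))) * (-z) ^ (j - 1) +
        (lagC α k j * ((k : ℝ) - (j : ℝ))) * (-z) ^ j := by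
    intro j _
    match j with
    | 0 => push_cast; ring
    | 1 => push_cast; ring
    | (m + 2) =>
      have e1 : m + 2 - 2 = m := by omega
      have e2 : m + 2 - 1 = m + 1 := by omega
      have e3 : m + 2 - 1 - 1 = m := by omega
      rw [e1, e2]
      push_cast
      ring
  rw [Finset.sum_congr rfl key, Finset.sum_add_distrib]
  rw [Finset.sum_range_succ', Finset.sum_range_succ]
  simp only [Nat.cast_zero, mul_zero, zero_mul, neg_zero, add_zero, Nat.cast_ofNat,
    Nat.add_sub_cancel, sub_self, mul_zero, zero_mul]
  rw [← Finset.sum_add_distrib]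
  apply Finset.sum_eq_zero
  intro i hi
  have hik : i < k := Finset.mem_range.mp hi
  have := lagC_rec α hα k i hik
  have hc : -(lagC α k (i + 1) * ((i + 1 : ℕ) : ℝ) * (((i + 1 : ℕ) : ℝ) + α)) =
      -(lagC α k i * ((k : ℝ) - i)) := by
    push_cast
    push_cast at this
    nlinarith [this]
  push_cast
  push_cast at hc
  rw [hc]
  ring

noncomputable def lagV (α : ℝ) (k : ℕ) (z : ℝ) : ℝ := laguerre α k z * Real.exp (-z / 2)

noncomputable def lagV1 (α : ℝ) (k : ℕ) (z : ℝ) : ℝ :=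
  (lagD1 α k z - laguerre α k z / 2) * Real.exp (-z / 2)

noncomputable def lagV2 (α : ℝ) (k : ℕ) (z : ℝ) : ℝ :=
  (lagD2 α k z - lagD1 α k z + laguerre α k z / 4) * Real.exp (-z / 2)

lemma hasDerivAt_exp_neg_half (z : ℝ) :
    HasDerivAt (fun z : ℝ => Real.exp (-z / 2)) (Real.exp (-z / 2) * (-1 / 2)) z := by
  have h1 : HasDerivAt (fun z : ℝ => -z / 2) (-1 / 2) z := (hasDerivAt_id z).neg.div_const 2
  exact (Real.hasDerivAt_exp _).comp z h1

lemma hasDerivAt_lagV (α : ℝ) (k : ℕ) (z : ℝ) :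
    HasDerivAt (lagV α k) (lagV1 α k z) z := by
  have h := (hasDerivAt_laguerre α k z).mul (hasDerivAt_exp_neg_half z)
  refine h.congr_deriv ?_
  unfold lagV1
  ring

lemma hasDerivAt_lagV1 (α : ℝ) (k : ℕ) (z : ℝ) :
    HasDerivAt (lagV1 α k) (lagV2 α k z) z := by
  have h := ((hasDerivAt_lagD1 α k z).sub ((hasDerivAt_laguerre α k z).div_const 2)).mul
    (hasDerivAt_exp_neg_half z)
  refine h.congr_deriv ?_
  unfold lagV2
  simp only [Pi.sub_apply]
  ring

lemma lagV_ode (α : ℝ) (hα : -1 < α) (k : ℕ) (z : ℝ) :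
    z * lagV2 α k z + (α + 1) * lagV1 α k z + ((α + 2 * k + 1) / 2 - z / 4) * lagV α k z = 0 := by
  have h := laguerre_ode α hα k z
  unfold lagV lagV1 lagV2
  nlinarith [h, Real.exp_pos (-z / 2)]

noncomputable def lagU (α θ : ℝ) (k : ℕ) (s : ℝ) : ℝ := lagV α k (s ^ θ)

noncomputable def lagU1 (α θ : ℝ) (k : ℕ) (s : ℝ) : ℝ :=
  θ * s ^ (θ - 1) * lagV1 α k (s ^ θ)

noncomputable def lagU2 (α θ : ℝ) (k : ℕ) (s : ℝ) : ℝ :=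
  θ * (θ - 1) * s ^ (θ - 2) * lagV1 α k (s ^ θ) +
    θ ^ 2 * s ^ (2 * θ - 2) * lagV2 α k (s ^ θ)

lemma hasDerivAt_rpow' (θ : ℝ) {s : ℝ} (hs : 0 < s) :
    HasDerivAt (fun s : ℝ => s ^ θ) (θ * s ^ (θ - 1)) s :=
  Real.hasDerivAt_rpow_const (Or.inl hs.ne')

lemma hasDerivAt_lagU (α θ : ℝ) (k : ℕ) {s : ℝ} (hs : 0 < s) :
    HasDerivAt (lagU α θ k) (lagU1 α θ k s) s := by
  have h := (hasDerivAt_lagV α k (s ^ θ)).comp s (hasDerivAt_rpow' θ hs)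
  refine h.congr_deriv ?_
  unfold lagU1
  ring

lemma hasDerivAt_lagU1 (α θ : ℝ) (k : ℕ) {s : ℝ} (hs : 0 < s) :
    HasDerivAt (lagU1 α θ k) (lagU2 α θ k s) s := by
  have h1 : HasDerivAt (fun s : ℝ => θ * s ^ (θ - 1)) (θ * ((θ - 1) * s ^ (θ - 1 - 1))) s :=
    (Real.hasDerivAt_rpow_const (Or.inl hs.ne')).const_mul θ
  have h2 : HasDerivAt (fun s : ℝ => lagV1 α k (s ^ θ))
      (lagV2 α k (s ^ θ) * (θ * s ^ (θ - 1))) s :=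
    by have := (hasDerivAt_lagV1 α k (s ^ θ)).comp s (hasDerivAt_rpow' θ hs); exact this
  have h := h1.mul h2
  refine h.congr_deriv ?_
  unfold lagU2
  have e1 : θ - 1 - 1 = θ - 2 := by ring
  have e2 : s ^ (θ - 1) * s ^ (θ - 1) = s ^ (2 * θ - 2) := by
    rw [← Real.rpow_add hs]; ring_nf
  rw [e1, ← e2]
  ring

lemma radial_identity (d n k : ℕ) (θ : ℝ) (s : ℝ) (hs : 0 < s)
    (β : ℝ) (hβ : -1 < β) (hβθ : β * θ = (n : ℝ) + (d : ℝ) / 2 - 1) :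
    -((2 * (d : ℝ) + 4 * (n : ℝ)) * lagU1 β θ k s + 4 * s * lagU2 β θ k s) +
        θ ^ 2 * s ^ (2 * θ - 1) * lagU β θ k s
      = 2 * θ ^ 2 * (β + 2 * (k : ℝ) + 1) * s ^ (θ - 1) * lagU β θ k s := by
  unfold lagU lagU1 lagU2
  have ha : s * s ^ (θ - 2) = s ^ (θ - 1) := by
    rw [show θ - 1 = 1 + (θ - 2) by ring, Real.rpow_add hs, Real.rpow_one]
  have hb : s * s ^ (2 * θ - 2) = s ^ (2 * θ - 1) := by
    rw [show 2 * θ - 1 = 1 + (2 * θ - 2) by ring, Real.rpow_add hs, Real.rpow_one]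
  have hcz : s ^ (2 * θ - 1) = s ^ (θ - 1) * s ^ θ := by
    rw [show 2 * θ - 1 = (θ - 1) + θ by ring, Real.rpow_add hs]
  have hode := lagV_ode β hβ k (s ^ θ)
  linear_combination (-4 * θ * (θ - 1) * lagV1 β k (s ^ θ)) * ha +
    (-4 * θ ^ 2 * lagV2 β k (s ^ θ)) * hb +
    (θ ^ 2 * lagV β k (s ^ θ) - 4 * θ ^ 2 * lagV2 β k (s ^ θ)) * hcz +
    (-4 * θ ^ 2 * s ^ (θ - 1)) * hode + (4 * θ * s ^ (θ - 1) * lagV1 β k (s ^ θ)) * hβθ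

noncomputable def grad {d : ℕ} (P : MvPolynomial (Fin d) ℝ)
    (y : EuclideanSpace ℝ (Fin d)) : EuclideanSpace ℝ (Fin d) →L[ℝ] ℝ :=
  ∑ i : Fin d, pEval (MvPolynomial.pderiv i P) y • EuclideanSpace.proj i

lemma hasFDerivAt_coord {d : ℕ} (i : Fin d) (y : EuclideanSpace ℝ (Fin d)) :
    HasFDerivAt (fun y : EuclideanSpace ℝ (Fin d) => y i)
      (EuclideanSpace.proj (𝕜 := ℝ) i) y :=
  (EuclideanSpace.proj (𝕜 := ℝ) i).hasFDerivAt

lemma hasFDerivAt_pEval {d : ℕ} (P : MvPolynomial (Fin d) ℝ)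
    (y : EuclideanSpace ℝ (Fin d)) : HasFDerivAt (pEval P) (grad P y) y := by
  induction P using MvPolynomial.induction_on with
  | C a =>
    have : pEval (d := d) (MvPolynomial.C a) = fun _ => a := by
      funext x; simp [pEval]
    rw [this]
    have hg : grad (d := d) (MvPolynomial.C a) y = 0 := by
      simp [grad, pEval]
    rw [hg]
    exact hasFDerivAt_const a y
  | add p q hp hq =>
    have : pEval (p + q) = fun x => pEval p x + pEval q x := by
      funext x; simp [pEval]
    rw [this]
    have hg : grad (p + q) y = grad p y + grad q y := by
      simp [grad, pEval, add_smul, Finset.sum_add_distrib]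
    rw [hg]
    exact hp.add hq
  | mul_X p i hp =>
    have : pEval (p * MvPolynomial.X i) = fun x => pEval p x * x i := by
      funext x; simp [pEval]
    rw [this]
    have h := hp.mul (hasFDerivAt_coord i y)
    have hg : grad (p * MvPolynomial.X i) y =
        pEval p y • EuclideanSpace.proj i + y i • grad p y := by
      unfold grad
      rw [Finset.smul_sum]
      have : ∀ j : Fin d, pEval (MvPolynomial.pderiv j (p * MvPolynomial.X i)) y •
          EuclideanSpace.proj (𝕜 := ℝ) j =
          (if j = i then pEval p y • EuclideanSpace.proj (𝕜 := ℝ) i else 0) +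
            y i • pEval (MvPolynomial.pderiv j p) y • EuclideanSpace.proj (𝕜 := ℝ) j := by
        intro j
        rw [MvPolynomial.pderiv_mul]
        by_cases hji : j = i
        · subst hji
          rw [MvPolynomial.pderiv_X_self]
          simp [pEval, add_smul, smul_smul]
          ring_nf
          rw [add_comm]
        · rw [MvPolynomial.pderiv_X_of_ne (Ne.symm hji)]
          simp [pEval, smul_smul, hji, mul_comm]
      rw [Finset.sum_congr rfl (fun j _ => this j), Finset.sum_add_distrib,
        Finset.sum_ite_eq' Finset.univ i]
      simp
    rw [hg]
    exact h

open MvPolynomial in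
lemma euler_poly {d n : ℕ} (P : MvPolynomial (Fin d) ℝ) (hhom : P.IsHomogeneous n) :
    ∑ i : Fin d, X i * pderiv i P = (C (n : ℝ)) * P := by
  conv_lhs => rw [P.as_sum]
  conv_rhs => rw [P.as_sum]
  simp only [map_sum, Finset.mul_sum]
  rw [Finset.sum_comm]
  apply Finset.sum_congr rfl
  intro v hv
  have hdeg : ∑ i ∈ v.support, v i = n := by
    have := hhom (mem_support_iff.mp hv)
    rw [Finsupp.weight_apply] at this
    simpa [Finsupp.sum, mul_comm] using this
  have key : ∀ i : Fin d, X i * pderiv i (monomial v (coeff v P)) =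
      C ((v i : ℝ)) * monomial v (coeff v P) := by
    intro i
    rw [pderiv_monomial]
    by_cases h : v i = 0
    · simp [h]
    · have hv' : Finsupp.single i 1 + (v - Finsupp.single i 1) = v := by
        ext j
        by_cases hj : j = i
        · subst hj
          simp [Finsupp.single_apply, Finsupp.tsub_apply]
          omega
        · simp [Finsupp.single_apply, Finsupp.tsub_apply, Ne.symm hj]
      rw [X, monomial_mul, hv', C_mul_monomial]
      ring_nf
  rw [Finset.sum_congr rfl (fun i _ => key i), ← Finset.sum_mul, ← map_sum]
  congr 2
  rw [← hdeg]
  push_cast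
  rw [Finset.sum_subset (Finset.subset_univ v.support)]
  intro x _ hx
  simp [Finsupp.notMem_support_iff.mp hx]

lemma euler_eval {d n : ℕ} (P : MvPolynomial (Fin d) ℝ) (hhom : P.IsHomogeneous n)
    (y : EuclideanSpace ℝ (Fin d)) :
    ∑ i : Fin d, y i * pEval (MvPolynomial.pderiv i P) y = (n : ℝ) * pEval P y := by
  have h := congrArg (MvPolynomial.eval fun i : Fin d => y i) (euler_poly P hhom)
  simpa [pEval, MvPolynomial.eval_mul] using h

noncomputable def grad2 {d : ℕ} (P : MvPolynomial (Fin d) ℝ) (x : EuclideanSpace ℝ (Fin d)) :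
    EuclideanSpace ℝ (Fin d) →L[ℝ] EuclideanSpace ℝ (Fin d) →L[ℝ] ℝ :=
  ∑ i : Fin d, (grad (MvPolynomial.pderiv i P) x).smulRight (EuclideanSpace.proj i)

lemma hasFDerivAt_grad {d : ℕ} (P : MvPolynomial (Fin d) ℝ) (x : EuclideanSpace ℝ (Fin d)) :
    HasFDerivAt (fun y => grad P y) (grad2 P x) x := by
  unfold grad grad2
  exact HasFDerivAt.fun_sum fun i _ =>
    (hasFDerivAt_pEval (MvPolynomial.pderiv i P) x).smul_const (EuclideanSpace.proj (𝕜 := ℝ) i)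

lemma proj_single {d : ℕ} (i j : Fin d) :
    EuclideanSpace.proj (𝕜 := ℝ) j (EuclideanSpace.single i (1 : ℝ)) =
      if j = i then 1 else 0 := by
  simp [EuclideanSpace.single_apply]

lemma lap_eq {d : ℕ} {f : EuclideanSpace ℝ (Fin d) → ℝ}
    {A : EuclideanSpace ℝ (Fin d) → (EuclideanSpace ℝ (Fin d) →L[ℝ] ℝ)}
    {B : EuclideanSpace ℝ (Fin d) →L[ℝ] EuclideanSpace ℝ (Fin d) →L[ℝ] ℝ}
    {x : EuclideanSpace ℝ (Fin d)}
    (hA : ∀ᶠ y in nhds x, HasFDerivAt f (A y) y) (hB : HasFDerivAt A B x) :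
    lap f x = ∑ i : Fin d, B (EuclideanSpace.single i 1) (EuclideanSpace.single i 1) := by
  have h1 : fderiv ℝ f =ᶠ[nhds x] A := hA.mono fun y hy => hy.fderiv
  have h2 : fderiv ℝ (fderiv ℝ f) x = B := by rw [h1.fderiv_eq, hB.fderiv]
  unfold lap
  simp only [iteratedFDeriv_two_apply, Matrix.cons_val_zero, Matrix.cons_val_one,
    Matrix.head_cons, h2]

lemma lap_pEval {d : ℕ} (P : MvPolynomial (Fin d) ℝ) (x : EuclideanSpace ℝ (Fin d)) :
    lap (pEval P) x =
      ∑ i : Fin d, pEval (MvPolynomial.pderiv i (MvPolynomial.pderiv i P)) x := by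
  rw [lap_eq (Filter.Eventually.of_forall (hasFDerivAt_pEval P)) (hasFDerivAt_grad P x)]
  apply Finset.sum_congr rfl
  intro i _
  simp [grad2, grad, ContinuousLinearMap.sum_apply, ContinuousLinearMap.smulRight_apply,
    ContinuousLinearMap.coe_smul', Pi.smul_apply, proj_single, Finset.sum_ite_eq',
    Finset.mem_univ]

noncomputable def qsq {d : ℕ} (y : EuclideanSpace ℝ (Fin d)) : ℝ := ∑ i : Fin d, y i * y i

noncomputable def lqmap {d : ℕ} (y : EuclideanSpace ℝ (Fin d)) :
    EuclideanSpace ℝ (Fin d) →L[ℝ] ℝ :=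
  ∑ i : Fin d, (2 * y i) • EuclideanSpace.proj i

noncomputable def mqmap {d : ℕ} :
    EuclideanSpace ℝ (Fin d) →L[ℝ] EuclideanSpace ℝ (Fin d) →L[ℝ] ℝ :=
  ∑ i : Fin d, ((2 : ℝ) • EuclideanSpace.proj (𝕜 := ℝ) i).smulRight (EuclideanSpace.proj i)

lemma hasFDerivAt_qsq {d : ℕ} (y : EuclideanSpace ℝ (Fin d)) :
    HasFDerivAt qsq (lqmap y) y := by
  unfold qsq lqmap
  apply HasFDerivAt.fun_sum
  intro i _
  have h := (hasFDerivAt_coord i y).mul (hasFDerivAt_coord i y)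
  refine h.congr_fderiv ?_
  rw [two_mul, add_smul]

lemma hasFDerivAt_lqmap {d : ℕ} (x : EuclideanSpace ℝ (Fin d)) :
    HasFDerivAt (fun y => lqmap y) (mqmap (d := d)) x := by
  unfold lqmap mqmap
  exact HasFDerivAt.fun_sum fun i _ =>
    ((hasFDerivAt_coord i x).const_mul 2).smul_const (EuclideanSpace.proj (𝕜 := ℝ) i)

lemma continuous_qsq {d : ℕ} : Continuous (qsq (d := d)) :=
  continuous_finset_sum _ fun i _ =>
    ((EuclideanSpace.proj (𝕜 := ℝ) i).continuous.mul (EuclideanSpace.proj i).continuous)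

lemma qsq_eq_norm {d : ℕ} (y : EuclideanSpace ℝ (Fin d)) : qsq y = ‖y‖ ^ 2 := by
  rw [EuclideanSpace.norm_eq, Real.sq_sqrt (by positivity)]
  unfold qsq
  apply Finset.sum_congr rfl
  intro i _
  rw [Real.norm_eq_abs, sq_abs, sq]

lemma norm_rpow_qsq {d : ℕ} (y : EuclideanSpace ℝ (Fin d)) (t : ℝ) :
    ‖y‖ ^ (2 * t) = (qsq y) ^ t := by
  rw [qsq_eq_norm, ← Real.rpow_natCast ‖y‖ 2, ← Real.rpow_mul (norm_nonneg y)]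
  norm_num

lemma lqmap_single {d : ℕ} (y : EuclideanSpace ℝ (Fin d)) (i : Fin d) :
    lqmap y (EuclideanSpace.single i 1) = 2 * y i := by
  simp [lqmap, proj_single, Finset.sum_ite_eq', Finset.mem_univ]

lemma grad_single {d : ℕ} (Q : MvPolynomial (Fin d) ℝ) (y : EuclideanSpace ℝ (Fin d))
    (i : Fin d) :
    grad Q y (EuclideanSpace.single i 1) = pEval (MvPolynomial.pderiv i Q) y := by
  simp [grad, proj_single, Finset.sum_ite_eq', Finset.mem_univ]

lemma mqmap_single {d : ℕ} (i : Fin d) :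
    mqmap (EuclideanSpace.single i 1) (EuclideanSpace.single i 1) = 2 := by
  simp [mqmap, proj_single, Finset.sum_ite_eq', Finset.mem_univ]

lemma grad2_single {d : ℕ} (P : MvPolynomial (Fin d) ℝ) (x : EuclideanSpace ℝ (Fin d))
    (i : Fin d) :
    grad2 P x (EuclideanSpace.single i 1) (EuclideanSpace.single i 1) =
      pEval (MvPolynomial.pderiv i (MvPolynomial.pderiv i P)) x := by
  simp [grad2, proj_single, grad_single, Finset.sum_ite_eq', Finset.mem_univ]

set_option maxHeartbeats 2000000

theorem muntz_ghf_generalized_eigen (d : ℕ) (hd : 1 ≤ d) (θ : ℝ)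
    (hθ : θ > max (1 - (d : ℝ) / 2) 0) (n k : ℕ)
    (P : MvPolynomial (Fin d) ℝ) (hhom : P.IsHomogeneous n)
    (hharm : ∀ x, lap (pEval P) x = 0) (x : EuclideanSpace ℝ (Fin d)) (hx : x ≠ 0) :
    -(lap (fun y => laguerre (((n : ℝ) + (d : ℝ) / 2 - 1) / θ) k (‖y‖ ^ (2 * θ)) *
          Real.exp (-‖y‖ ^ (2 * θ) / 2) * pEval P y) x) +
        θ ^ 2 * ‖x‖ ^ (4 * θ - 2) *
          (laguerre (((n : ℝ) + (d : ℝ) / 2 - 1) / θ) k (‖x‖ ^ (2 * θ)) *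
            Real.exp (-‖x‖ ^ (2 * θ) / 2) * pEval P x)
      = 2 * θ ^ 2 * (((n : ℝ) + (d : ℝ) / 2 - 1) / θ + 2 * k + 1) * ‖x‖ ^ (2 * θ - 2) *
          (laguerre (((n : ℝ) + (d : ℝ) / 2 - 1) / θ) k (‖x‖ ^ (2 * θ)) *
            Real.exp (-‖x‖ ^ (2 * θ) / 2) * pEval P x) := by
  have hθ0 : 0 < θ := lt_of_le_of_lt (le_max_right _ _) hθ
  have hθ1 : 1 - (d : ℝ) / 2 < θ := lt_of_le_of_lt (le_max_left _ _) hθ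
  set β : ℝ := ((n : ℝ) + (d : ℝ) / 2 - 1) / θ with hβdef
  have hβθ : β * θ = (n : ℝ) + (d : ℝ) / 2 - 1 := div_mul_cancel₀ _ hθ0.ne'
  have hβ : -1 < β := by
    rw [hβdef, lt_div_iff₀ hθ0]
    have hn0 : (0 : ℝ) ≤ (n : ℝ) := Nat.cast_nonneg n
    nlinarith
  have hqx : 0 < qsq x := by
    rw [qsq_eq_norm]
    exact pow_pos (norm_pos_iff.mpr hx) 2
  -- rewrite the function
  have hFeq : (fun y : EuclideanSpace ℝ (Fin d) => laguerre β k (‖y‖ ^ (2 * θ)) *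
      Real.exp (-‖y‖ ^ (2 * θ) / 2) * pEval P y)
      = fun y => lagU β θ k (qsq y) * pEval P y := by
    funext y
    rw [norm_rpow_qsq y θ]
    simp only [lagU, lagV]
  rw [hFeq]
  have hFx := congrFun hFeq x
  rw [hFx]
  rw [show (4 : ℝ) * θ - 2 = 2 * (2 * θ - 1) by ring, norm_rpow_qsq x (2 * θ - 1),
    show (2 : ℝ) * θ - 2 = 2 * (θ - 1) by ring, norm_rpow_qsq x (θ - 1)]
  -- compute the Laplacian
  set A : EuclideanSpace ℝ (Fin d) → (EuclideanSpace ℝ (Fin d) →L[ℝ] ℝ) :=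
    fun y => lagU β θ k (qsq y) • grad P y + pEval P y • (lagU1 β θ k (qsq y) • lqmap y)
    with hAdef
  have hA : ∀ᶠ y in nhds x, HasFDerivAt (fun y => lagU β θ k (qsq y) * pEval P y) (A y) y := by
    have hS : IsOpen {y : EuclideanSpace ℝ (Fin d) | 0 < qsq y} :=
      isOpen_Ioi.preimage continuous_qsq
    filter_upwards [hS.mem_nhds hqx] with y hy
    exact ((hasDerivAt_lagU β θ k hy).comp_hasFDerivAt y (hasFDerivAt_qsq y)).mul
      (hasFDerivAt_pEval P y)
  have hc1 : HasFDerivAt (fun y => lagU β θ k (qsq y)) (lagU1 β θ k (qsq x) • lqmap x) x :=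
    (hasDerivAt_lagU β θ k hqx).comp_hasFDerivAt x (hasFDerivAt_qsq x)
  have hc2 : HasFDerivAt (fun y => lagU1 β θ k (qsq y)) (lagU2 β θ k (qsq x) • lqmap x) x :=
    (hasDerivAt_lagU1 β θ k hqx).comp_hasFDerivAt x (hasFDerivAt_qsq x)
  have hB1 := hc1.smul (hasFDerivAt_grad P x)
  have hB2inner := hc2.smul (hasFDerivAt_lqmap x)
  have hB2 := (hasFDerivAt_pEval P x).smul hB2inner
  have hB : HasFDerivAt A _ x := hB1.add hB2
  have hlap := lap_eq hA hB
  rw [hlap]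
  -- evaluate the second derivative on basis vectors
  have heval : ∀ i : Fin d,
      ((lagU β θ k (qsq x) • grad2 P x +
          (lagU1 β θ k (qsq x) • lqmap x).smulRight (grad P x) +
        (pEval P x • (lagU1 β θ k (qsq x) • mqmap +
            (lagU2 β θ k (qsq x) • lqmap x).smulRight (lqmap x)) +
          (grad P x).smulRight (lagU1 β θ k (qsq x) • lqmap x))) :
        EuclideanSpace ℝ (Fin d) →L[ℝ] EuclideanSpace ℝ (Fin d) →L[ℝ] ℝ)
        (EuclideanSpace.single i 1) (EuclideanSpace.single i 1)
      = lagU β θ k (qsq x) * pEval (MvPolynomial.pderiv i (MvPolynomial.pderiv i P)) x +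
          4 * lagU1 β θ k (qsq x) * (x i * pEval (MvPolynomial.pderiv i P) x) +
          2 * lagU1 β θ k (qsq x) * pEval P x +
          4 * lagU2 β θ k (qsq x) * (x i * x i) * pEval P x := by
    intro i
    simp only [ContinuousLinearMap.add_apply, ContinuousLinearMap.coe_smul', Pi.smul_apply,
      ContinuousLinearMap.smulRight_apply, ContinuousLinearMap.smul_apply, smul_eq_mul,
      grad2_single, grad_single, lqmap_single, mqmap_single]
    ring
  have hsum : ∑ i : Fin d, ((lagU β θ k (qsq x) • grad2 P x +
          (lagU1 β θ k (qsq x) • lqmap x).smulRight (grad P x) +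
        (pEval P x • (lagU1 β θ k (qsq x) • mqmap +
            (lagU2 β θ k (qsq x) • lqmap x).smulRight (lqmap x)) +
          (grad P x).smulRight (lagU1 β θ k (qsq x) • lqmap x))) :
        EuclideanSpace ℝ (Fin d) →L[ℝ] EuclideanSpace ℝ (Fin d) →L[ℝ] ℝ)
        (EuclideanSpace.single i 1) (EuclideanSpace.single i 1)
      = (2 * (d : ℝ) + 4 * (n : ℝ)) * lagU1 β θ k (qsq x) * pEval P x +
          4 * qsq x * lagU2 β θ k (qsq x) * pEval P x := by
    rw [Finset.sum_congr rfl fun i _ => heval i]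
    rw [Finset.sum_add_distrib, Finset.sum_add_distrib, Finset.sum_add_distrib,
      ← Finset.mul_sum, ← Finset.mul_sum]
    have h1 : ∑ i : Fin d,
        pEval (MvPolynomial.pderiv i (MvPolynomial.pderiv i P)) x = 0 := by
      rw [← lap_pEval]; exact hharm x
    have h2 : ∑ i : Fin d, x i * pEval (MvPolynomial.pderiv i P) x = (n : ℝ) * pEval P x :=
      euler_eval P hhom x
    have h3 : ∑ i : Fin d, (2 : ℝ) * lagU1 β θ k (qsq x) * pEval P x =
        (d : ℝ) * (2 * lagU1 β θ k (qsq x) * pEval P x) := by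
      rw [Finset.sum_const, Finset.card_univ, Fintype.card_fin, nsmul_eq_mul]
    have h4 : ∑ i : Fin d, (4 : ℝ) * lagU2 β θ k (qsq x) * (x i * x i) * pEval P x =
        4 * lagU2 β θ k (qsq x) * qsq x * pEval P x := by
      rw [qsq, Finset.mul_sum, Finset.sum_mul]
    rw [h1, h2, h3, h4]
    ring
  simp only [Pi.smul_apply']
  rw [hsum]
  have hrad := radial_identity d n k θ (qsq x) hqx β hβ hβθ
  linear_combination (pEval P x) * hrad
end

section
/- For d ≥ 2, Z ≠ 0, k ≥ 0, n ≥ 0 and any degree-n solid harmonic Y, the function u(x) = L_k^{(2n+d-2)}(κ|x|) e^{-κ|x|/2} Y(κx) with κ = 4|Z|/(2n+2k+d-1) satisfies the Schrödinger equation with Coulomb potential: (-½Δ - |Z|/|x|) u(x) = -2Z²/(2n+2k+d-1)² · u(x) for x ≠ 0. -/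
open MeasureTheory Real

namespace Aux

variable {d : ℕ}

noncomputable def grad (P : MvPolynomial (Fin d) ℝ) (x : EuclideanSpace ℝ (Fin d)) :
    EuclideanSpace ℝ (Fin d) →L[ℝ] ℝ :=
  ∑ i : Fin d, pEval (MvPolynomial.pderiv i P) x • EuclideanSpace.proj i

lemma contDiff_pEval (P : MvPolynomial (Fin d) ℝ) {m : ℕ∞} : ContDiff ℝ m (pEval (d := d) P) := by
  induction P using MvPolynomial.induction_on with
  | C a =>
      have : pEval (d := d) (MvPolynomial.C a) = fun _ => a := by funext y; simp [pEval]
      rw [this]; exact contDiff_const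
  | add p q hp hq =>
      have : pEval (d := d) (p + q) = fun y => pEval p y + pEval q y := by
        funext y; simp [pEval]
      rw [this]; exact hp.add hq
  | mul_X p i hp =>
      have : pEval (d := d) (p * MvPolynomial.X i) = fun x => pEval p x * x i := by
        funext x; simp [pEval]
      rw [this]
      exact hp.mul (ContinuousLinearMap.contDiff (EuclideanSpace.proj (𝕜 := ℝ) i))

lemma hasFDerivAt_pEval (P : MvPolynomial (Fin d) ℝ) (x : EuclideanSpace ℝ (Fin d)) :
    HasFDerivAt (pEval P) (grad P x) x := by
  induction P using MvPolynomial.induction_on with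
  | C a =>
      have hg : grad (d := d) (MvPolynomial.C a) x = 0 := by
        have : ∀ i : Fin d, pEval (MvPolynomial.pderiv i (MvPolynomial.C a : MvPolynomial (Fin d) ℝ)) x = 0 := by
          intro i; rw [MvPolynomial.pderiv_C]; simp [pEval]
        have h0 : pEval (0 : MvPolynomial (Fin d) ℝ) x = 0 := by simp [pEval]
        simp [grad, MvPolynomial.pderiv_C, h0]
      rw [hg]
      have : pEval (d := d) (MvPolynomial.C a) = fun _ => a := by funext y; simp [pEval]
      rw [this]; exact hasFDerivAt_const _ _
  | add p q hp hq =>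
      have : pEval (d := d) (p + q) = fun y => pEval p y + pEval q y := by
        funext y; simp [pEval]
      rw [this]
      have hg : grad (d := d) (p + q) x = grad p x + grad q x := by
        simp only [grad, ← Finset.sum_add_distrib]
        refine Finset.sum_congr rfl fun j _ => ?_
        have : pEval (MvPolynomial.pderiv j (p + q)) x
            = pEval (MvPolynomial.pderiv j p) x + pEval (MvPolynomial.pderiv j q) x := by
          simp [pEval, map_add]
        rw [this, add_smul]
      rw [hg]; exact hp.add hq
  | mul_X p i hp =>
      classical
      have hfun : pEval (d := d) (p * MvPolynomial.X i) = fun y => pEval p y * y i := by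
        funext y; simp [pEval]
      rw [hfun]
      have h2 : HasFDerivAt (fun y : EuclideanSpace ℝ (Fin d) => y i)
          (EuclideanSpace.proj (𝕜 := ℝ) i) x := (EuclideanSpace.proj (𝕜 := ℝ) i).hasFDerivAt
      have hmul := hp.mul' h2
      have hg : grad (d := d) (p * MvPolynomial.X i) x
          = pEval p x • EuclideanSpace.proj (𝕜 := ℝ) i + (grad p x).smulRight (x i) := by
        ext v
        have key : ∀ j : Fin d, pEval (MvPolynomial.pderiv j (p * MvPolynomial.X i)) x
            = pEval (MvPolynomial.pderiv j p) x * x i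
              + pEval p x * (if j = i then 1 else 0) := by
          intro j
          rw [MvPolynomial.pderiv_mul]
          simp only [pEval, MvPolynomial.pderiv_X, Pi.single_apply, map_add,
            MvPolynomial.eval_mul, MvPolynomial.eval_X]
          by_cases h : j = i
          · subst h; simp
          · simp [h, Ne.symm h]
        simp only [grad, ContinuousLinearMap.sum_apply, ContinuousLinearMap.smul_apply,
          ContinuousLinearMap.add_apply, ContinuousLinearMap.smulRight_apply, smul_eq_mul, key,
          add_mul]
        rw [Finset.sum_add_distrib]
        have e1 : ∑ j : Fin d, pEval (MvPolynomial.pderiv j p) x * x i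
              * (EuclideanSpace.proj (𝕜 := ℝ) j) v
            = (∑ j : Fin d, pEval (MvPolynomial.pderiv j p) x
              * (EuclideanSpace.proj (𝕜 := ℝ) j) v) * x i := by
          rw [Finset.sum_mul]; exact Finset.sum_congr rfl fun j _ => by ring
        have e2 : ∑ j : Fin d, pEval p x * (if j = i then 1 else 0)
              * (EuclideanSpace.proj (𝕜 := ℝ) j) v
            = pEval p x * (EuclideanSpace.proj (𝕜 := ℝ) i) v := by
          rw [Finset.sum_eq_single i] <;> simp +contextual
        rw [e1, e2]; ring
      rw [hg]; exact hmul
end Aux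

namespace Aux
open MvPolynomial
variable {d : ℕ}

lemma fderiv_pEval (P : MvPolynomial (Fin d) ℝ) (x : EuclideanSpace ℝ (Fin d)) :
    fderiv ℝ (pEval P) x = grad P x := (hasFDerivAt_pEval P x).fderiv

lemma grad_apply (P : MvPolynomial (Fin d) ℝ) (x v : EuclideanSpace ℝ (Fin d)) :
    grad P x v = ∑ i : Fin d, pEval (MvPolynomial.pderiv i P) x * v i := by
  simp [grad]

lemma grad_single (P : MvPolynomial (Fin d) ℝ) (x : EuclideanSpace ℝ (Fin d)) (i : Fin d) :
    grad P x (EuclideanSpace.single i 1) = pEval (MvPolynomial.pderiv i P) x := by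
  rw [grad_apply, Finset.sum_eq_single i]
  · simp
  · intro j _ hj; simp [EuclideanSpace.single_apply, hj]
  · simp

lemma lap_eq (f : EuclideanSpace ℝ (Fin d) → ℝ) (x : EuclideanSpace ℝ (Fin d))
    (hdiff : DifferentiableAt ℝ (fderiv ℝ f) x) :
    lap f x = ∑ i : Fin d, fderiv ℝ (fun y => fderiv ℝ f y (EuclideanSpace.single i 1)) x
      (EuclideanSpace.single i 1) := by
  unfold lap
  refine Finset.sum_congr rfl fun i _ => ?_
  rw [iteratedFDeriv_two_apply]
  have := fderiv_clm_apply (c := fderiv ℝ f) (u := fun _ => EuclideanSpace.single i 1)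
    (x := x) hdiff (differentiableAt_const _)
  rw [this]
  simp

lemma pEval_smul {P : MvPolynomial (Fin d) ℝ} {n : ℕ} (h : P.IsHomogeneous n) (c : ℝ)
    (y : EuclideanSpace ℝ (Fin d)) : pEval P (c • y) = c ^ n * pEval P y := by
  have hsm : (fun i => (c • y) i) = fun i => c * y i := rfl
  unfold pEval
  rw [hsm]
  conv_lhs => rw [P.as_sum]
  conv_rhs => rw [P.as_sum]
  rw [map_sum, map_sum, Finset.mul_sum]
  refine Finset.sum_congr rfl fun m hm => ?_
  rw [MvPolynomial.eval_monomial, MvPolynomial.eval_monomial]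
  have hdeg : ∑ i ∈ m.support, m i = n := by
    have := h (MvPolynomial.mem_support_iff.mp hm)
    rw [Finsupp.weight_apply] at this
    simpa [Finsupp.sum] using this
  unfold Finsupp.prod
  have : ∏ i ∈ m.support, (c * y i) ^ m i
      = c ^ n * ∏ i ∈ m.support, (y i) ^ m i := by
    rw [← hdeg, ← Finset.prod_pow_eq_pow_sum, ← Finset.prod_mul_distrib]
    exact Finset.prod_congr rfl fun i _ => (mul_pow _ _ _)
  rw [this]; ring

lemma euler {P : MvPolynomial (Fin d) ℝ} {n : ℕ} (h : P.IsHomogeneous n)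
    (x : EuclideanSpace ℝ (Fin d)) :
    ∑ i : Fin d, x i * pEval (MvPolynomial.pderiv i P) x = (n : ℝ) * pEval P x := by
  have hs : HasDerivAt (fun t : ℝ => t • x) x 1 := by
    simpa using (hasDerivAt_id (1:ℝ)).smul_const x
  have h1 : HasDerivAt (fun t : ℝ => pEval P (t • x)) (grad P ((1:ℝ) • x) x) 1 := by
    have := (hasFDerivAt_pEval P ((1:ℝ) • x)).comp_hasDerivAt (1:ℝ) hs
    rw [Function.comp_def] at this; exact this
  have h2 : (fun t : ℝ => pEval P (t • x)) = fun t => t ^ n * pEval P x :=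
    by funext t; exact pEval_smul h t x
  rw [h2] at h1
  have h3 : HasDerivAt (fun t : ℝ => t ^ n * pEval P x)
      ((n : ℝ) * (1:ℝ) ^ (n - 1) * pEval P x) 1 := (hasDerivAt_pow n 1).mul_const _
  have := h1.unique h3
  rw [one_smul, grad_apply] at this
  have h4 : ∑ i : Fin d, pEval (MvPolynomial.pderiv i P) x * x i = (n : ℝ) * pEval P x := by
    simpa using this
  rw [← h4]
  exact Finset.sum_congr rfl fun i _ => mul_comm _ _

lemma lap_pEval (P : MvPolynomial (Fin d) ℝ) (x : EuclideanSpace ℝ (Fin d)) :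
    lap (pEval P) x = ∑ i : Fin d, pEval (MvPolynomial.pderiv i (MvPolynomial.pderiv i P)) x := by
  have hcd : ContDiff ℝ 2 (pEval (d := d) P) := contDiff_pEval P
  have hdiff : DifferentiableAt ℝ (fderiv ℝ (pEval P)) x := by
    have := hcd.fderiv_right (m := 1) (by norm_num)
    exact (this.differentiable one_ne_zero).differentiableAt
  rw [lap_eq _ _ hdiff]
  refine Finset.sum_congr rfl fun i _ => ?_
  have hfun : (fun y => fderiv ℝ (pEval P) y (EuclideanSpace.single i 1))
      = pEval (MvPolynomial.pderiv i P) := by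
    funext y; rw [fderiv_pEval, grad_single]
  rw [hfun, fderiv_pEval, grad_single]
end Aux

namespace Aux
variable {d : ℕ}

lemma hasFDerivAt_norm' {y : EuclideanSpace ℝ (Fin d)} (hy : y ≠ 0) :
    HasFDerivAt (fun z : EuclideanSpace ℝ (Fin d) => ‖z‖) (‖y‖⁻¹ • innerSL ℝ y) y := by
  have h1 : HasFDerivAt (fun z : EuclideanSpace ℝ (Fin d) => ‖z‖ ^ 2)
      ((2:ℕ) • innerSL ℝ y) y := (hasStrictFDerivAt_norm_sq y).hasFDerivAt
  have h2 : (‖y‖:ℝ) ^ 2 ≠ 0 := pow_ne_zero _ (norm_ne_zero_iff.mpr hy)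
  have h3 := h1.sqrt h2
  have h4 : (fun z : EuclideanSpace ℝ (Fin d) => Real.sqrt (‖z‖ ^ 2))
      = fun z : EuclideanSpace ℝ (Fin d) => ‖z‖ := by
    funext z; exact Real.sqrt_sq (norm_nonneg z)
  rw [h4] at h3
  have h5 : ‖y‖⁻¹ • innerSL ℝ y = (1 / (2 * Real.sqrt (‖y‖ ^ 2))) • ((2:ℕ) • innerSL ℝ y) := by
    rw [Real.sqrt_sq (norm_nonneg y)]
    ext v
    simp only [ContinuousLinearMap.smul_apply, smul_eq_mul, nsmul_eq_mul, Nat.cast_ofNat]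
    have : ‖y‖ ≠ 0 := norm_ne_zero_iff.mpr hy
    field_simp
  rw [h5]; exact h3

lemma lap_radial (f : ℝ → ℝ) (hf : ContDiff ℝ 2 f) (P : MvPolynomial (Fin d) ℝ) (n : ℕ)
    (hhom : P.IsHomogeneous n)
    (hH : ∀ y, ∑ i : Fin d, pEval (MvPolynomial.pderiv i (MvPolynomial.pderiv i P)) y = 0)
    (x : EuclideanSpace ℝ (Fin d)) (hx : x ≠ 0) :
    lap (fun y => f ‖y‖ * pEval P y) x
      = (deriv (deriv f) ‖x‖ + (2 * n + d - 1) / ‖x‖ * deriv f ‖x‖) * pEval P x := by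
  classical
  have hr : ‖x‖ ≠ 0 := norm_ne_zero_iff.mpr hx
  have hrpos : 0 < ‖x‖ := norm_pos_iff.mpr hx
  have hfd : Differentiable ℝ f := hf.differentiable two_ne_zero
  have hfd2 : Differentiable ℝ (deriv f) := by
    have h2 : ContDiff ℝ ((1:WithTop ℕ∞) + 1) f := by
      have : ((1:WithTop ℕ∞) + 1) = (2 : WithTop ℕ∞) := by norm_num
      rw [this]
      exact hf
    exact ((contDiff_succ_iff_deriv.mp h2).2.2).differentiable one_ne_zero
  set u : EuclideanSpace ℝ (Fin d) → ℝ := fun y => f ‖y‖ * pEval P y with hu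
  -- derivative of u at nonzero points
  have huy : ∀ (y : EuclideanSpace ℝ (Fin d)), y ≠ 0 →
      HasFDerivAt u ((f ‖y‖) • grad P y
        + (deriv f ‖y‖ • (‖y‖⁻¹ • innerSL ℝ y)).smulRight (pEval P y)) y := by
    intro y hy
    have h1 : HasFDerivAt (fun z : EuclideanSpace ℝ (Fin d) => f ‖z‖)
        (deriv f ‖y‖ • (‖y‖⁻¹ • innerSL ℝ y)) y :=
      ((hfd ‖y‖).hasDerivAt).comp_hasFDerivAt y (hasFDerivAt_norm' hy)
    exact h1.mul' (hasFDerivAt_pEval P y)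
  set Φ : Fin d → EuclideanSpace ℝ (Fin d) → ℝ := fun i y =>
    deriv f ‖y‖ * ‖y‖⁻¹ * y i * pEval P y + f ‖y‖ * pEval (MvPolynomial.pderiv i P) y with hΦdef
  have hΦ : ∀ i : Fin d, (fun y => fderiv ℝ u y (EuclideanSpace.single i 1)) =ᶠ[nhds x] Φ i := by
    intro i
    filter_upwards [IsOpen.mem_nhds (isOpen_compl_singleton (x := (0:EuclideanSpace ℝ (Fin d)))) hx]
      with y hy
    rw [(huy y hy).fderiv]
    simp only [hΦdef, ContinuousLinearMap.add_apply, ContinuousLinearMap.smul_apply,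
      ContinuousLinearMap.smulRight_apply, smul_eq_mul, grad_single, innerSL_apply_apply,
      EuclideanSpace.inner_single_right, RCLike.star_def, conj_trivial]
    ring
  have hsm : ContDiffAt ℝ 2 u x := by
    have hnorm : ContDiffAt ℝ 2 (fun y : EuclideanSpace ℝ (Fin d) => ‖y‖) x := contDiffAt_norm (𝕜 := ℝ) hx
    exact (hf.contDiffAt.comp x hnorm).mul (contDiff_pEval P).contDiffAt
  have hdiff : DifferentiableAt ℝ (fderiv ℝ u) x := by
    have := hsm.fderiv_right (m := 1) le_rfl
    exact this.differentiableAt one_ne_zero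
  rw [lap_eq u x hdiff]
  have hval : ∀ i : Fin d,
      fderiv ℝ (fun y => fderiv ℝ u y (EuclideanSpace.single i 1)) x (EuclideanSpace.single i 1)
      = (deriv (deriv f) ‖x‖ * ‖x‖⁻¹ * ‖x‖⁻¹ * pEval P x
          - deriv f ‖x‖ * (‖x‖ ^ 2)⁻¹ * ‖x‖⁻¹ * pEval P x) * (x i * x i)
        + (2 * deriv f ‖x‖ * ‖x‖⁻¹) * (x i * pEval (MvPolynomial.pderiv i P) x)
        + f ‖x‖ * pEval (MvPolynomial.pderiv i (MvPolynomial.pderiv i P)) x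
        + deriv f ‖x‖ * ‖x‖⁻¹ * pEval P x := by
    intro i
    rw [(hΦ i).fderiv_eq]
    have hA : HasFDerivAt (fun y : EuclideanSpace ℝ (Fin d) => deriv f ‖y‖)
        (deriv (deriv f) ‖x‖ • (‖x‖⁻¹ • innerSL ℝ x)) x :=
      ((hfd2 ‖x‖).hasDerivAt).comp_hasFDerivAt x (hasFDerivAt_norm' hx)
    have hB : HasFDerivAt (fun y : EuclideanSpace ℝ (Fin d) => ‖y‖⁻¹)
        ((-(‖x‖ ^ 2)⁻¹) • (‖x‖⁻¹ • innerSL ℝ x)) x :=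
      (hasDerivAt_inv hr).comp_hasFDerivAt x (hasFDerivAt_norm' hx)
    have hC : HasFDerivAt (fun y : EuclideanSpace ℝ (Fin d) => y i)
        (EuclideanSpace.proj (𝕜 := ℝ) i) x := (EuclideanSpace.proj (𝕜 := ℝ) i).hasFDerivAt
    have hA2 : HasFDerivAt (fun z : EuclideanSpace ℝ (Fin d) => f ‖z‖)
        (deriv f ‖x‖ • (‖x‖⁻¹ • innerSL ℝ x)) x :=
      ((hfd ‖x‖).hasDerivAt).comp_hasFDerivAt x (hasFDerivAt_norm' hx)
    have H := ((((hA.mul' hB).mul' hC).mul' (hasFDerivAt_pEval P x)).add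
      (hA2.mul' (hasFDerivAt_pEval (MvPolynomial.pderiv i P) x)))
    have hΦeq : Φ i = fun y => deriv f ‖y‖ * ‖y‖⁻¹ * y i * pEval P y
        + f ‖y‖ * pEval (MvPolynomial.pderiv i P) y := rfl
    rw [hΦeq]
    rw [(show HasFDerivAt (fun y : EuclideanSpace ℝ (Fin d) => deriv f ‖y‖ * ‖y‖⁻¹ * y i * pEval P y
        + f ‖y‖ * pEval (MvPolynomial.pderiv i P) y) _ x from H).fderiv]
    have hproj : (EuclideanSpace.proj (𝕜 := ℝ) i) (EuclideanSpace.single i (1:ℝ)) = 1 := by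
      simp [EuclideanSpace.single_apply]
    simp only [ContinuousLinearMap.add_apply, ContinuousLinearMap.smul_apply,
      ContinuousLinearMap.smulRight_apply, smul_eq_mul, grad_single, innerSL_apply_apply,
      EuclideanSpace.inner_single_right, RCLike.star_def, conj_trivial, hproj, op_smul_eq_mul, Pi.mul_apply]
    ring
  rw [Finset.sum_congr rfl (fun i _ => hval i)]
  have hsq : ∑ i : Fin d, x i * x i = ‖x‖ ^ 2 := by
    have := EuclideanSpace.norm_eq x
    have h2 : ‖x‖ ^ 2 = ∑ i : Fin d, ‖x i‖ ^ 2 := by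
      rw [this, Real.sq_sqrt]
      exact Finset.sum_nonneg fun i _ => sq_nonneg _
    rw [h2]
    exact Finset.sum_congr rfl fun i _ => by
      rw [Real.norm_eq_abs, sq_abs]; ring
  rw [Finset.sum_add_distrib, Finset.sum_add_distrib, Finset.sum_add_distrib,
    ← Finset.mul_sum, ← Finset.mul_sum, ← Finset.mul_sum, hsq, euler hhom x, hH x, mul_zero,
    Finset.sum_const, Finset.card_univ, Fintype.card_fin, nsmul_eq_mul]
  field_simp
  ring
end Aux

namespace Aux

noncomputable def lcoef (α : ℝ) (k j : ℕ) : ℝ :=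
  Real.Gamma (α + k + 1) /
    (Real.Gamma (α + j + 1) * ((k - j).factorial : ℝ) * (j.factorial : ℝ))

noncomputable def lagD (α : ℝ) (k : ℕ) (z : ℝ) : ℝ :=
  ∑ j ∈ Finset.range (k + 1), lcoef α k j * (-1) ^ j * (j : ℝ) * z ^ (j - 1)

noncomputable def lagD2 (α : ℝ) (k : ℕ) (z : ℝ) : ℝ :=
  ∑ j ∈ Finset.range (k + 1),
    lcoef α k j * (-1) ^ j * (j : ℝ) * ((j - 1 : ℕ) : ℝ) * z ^ (j - 2)

lemma laguerre_eq (α : ℝ) (k : ℕ) (z : ℝ) :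
    laguerre α k z = ∑ j ∈ Finset.range (k + 1), lcoef α k j * (-1) ^ j * z ^ j := by
  unfold laguerre lcoef
  refine Finset.sum_congr rfl fun j _ => ?_
  rw [neg_pow]; ring

lemma hasDerivAt_laguerre (α : ℝ) (k : ℕ) (z : ℝ) :
    HasDerivAt (laguerre α k) (lagD α k z) z := by
  have h : (laguerre α k) = fun z => ∑ j ∈ Finset.range (k + 1),
      lcoef α k j * (-1) ^ j * z ^ j := funext fun z => laguerre_eq α k z
  rw [h]
  have H := HasDerivAt.fun_sum (fun j (_ : j ∈ Finset.range (k+1)) =>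
    (hasDerivAt_pow j z).const_mul (lcoef α k j * (-1) ^ j))
  refine H.congr_deriv ?_
  unfold lagD
  refine Finset.sum_congr rfl fun j _ => by ring

lemma hasDerivAt_lagD (α : ℝ) (k : ℕ) (z : ℝ) :
    HasDerivAt (lagD α k) (lagD2 α k z) z := by
  have H := HasDerivAt.fun_sum (fun j (_ : j ∈ Finset.range (k+1)) =>
    (hasDerivAt_pow (j-1) z).const_mul (lcoef α k j * (-1) ^ j * (j : ℝ)))
  refine H.congr_deriv ?_
  unfold lagD2
  refine Finset.sum_congr rfl fun j _ => by rw [Nat.sub_sub]; ring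

lemma lcoef_key {α : ℝ} (hα : 0 ≤ α) {k m : ℕ} (hm : m < k) :
    lcoef α k (m + 1) * ((m : ℝ) + 1) * (α + m + 1) = ((k - m : ℕ) : ℝ) * lcoef α k m := by
  unfold lcoef
  have hg : Real.Gamma (α + (m + 1 : ℕ) + 1) = (α + m + 1) * Real.Gamma (α + m + 1) := by
    have : α + ((m : ℝ) + 1) + 1 = (α + m + 1) + 1 := by push_cast; ring
    push_cast
    rw [this, Real.Gamma_add_one]
    positivity
  have hgpos : 0 < Real.Gamma (α + m + 1) := Real.Gamma_pos_of_pos (by positivity)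
  have hfac : (k - m).factorial = (k - m) * (k - (m+1)).factorial := by
    have h1 : k - m = (k - (m+1)) + 1 := by omega
    rw [h1, Nat.factorial_succ]
  have hmfac : (m + 1).factorial = (m + 1) * m.factorial := Nat.factorial_succ m
  have hfacc : (((k - m).factorial : ℕ) : ℝ)
      = ((k : ℝ) - m) * ((k - (m+1)).factorial : ℝ) := by
    rw [hfac]
    push_cast [Nat.cast_sub hm.le]
    ring
  have h1 : Real.Gamma (α + m + 1) ≠ 0 := ne_of_gt hgpos
  have h2 : ((k - (m+1)).factorial : ℝ) ≠ 0 := Nat.cast_ne_zero.mpr (Nat.factorial_ne_zero _)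
  have h3 : ((m).factorial : ℝ) ≠ 0 := Nat.cast_ne_zero.mpr (Nat.factorial_ne_zero _)
  have h4 : ((k : ℝ) - m) ≠ 0 := by
    have : (m : ℝ) < k := by exact_mod_cast hm
    linarith
  have h5 : (α + (m:ℝ) + 1) ≠ 0 := by positivity
  push_cast [hfacc, hmfac, Nat.cast_sub hm.le] at hg ⊢
  rw [hg]
  field_simp

lemma laguerre_ode {α : ℝ} (hα : 0 ≤ α) (k : ℕ) (z : ℝ) :
    z * lagD2 α k z + (α + 1 - z) * lagD α k z + (k : ℝ) * laguerre α k z = 0 := by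
  rw [laguerre_eq]
  unfold lagD lagD2
  have e1 : z * (∑ j ∈ Finset.range (k + 1),
        lcoef α k j * (-1) ^ j * (j : ℝ) * ((j - 1 : ℕ) : ℝ) * z ^ (j - 2))
      + (α + 1) * (∑ j ∈ Finset.range (k + 1), lcoef α k j * (-1) ^ j * (j : ℝ) * z ^ (j - 1))
      = ∑ j ∈ Finset.range (k + 1),
        lcoef α k j * (-1) ^ j * (j : ℝ) * ((j : ℝ) + α) * z ^ (j - 1) := by
    rw [Finset.mul_sum, Finset.mul_sum, ← Finset.sum_add_distrib]
    refine Finset.sum_congr rfl fun j _ => ?_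
    match j with
    | 0 => simp
    | 1 => simp; ring
    | (j + 2) =>
        have : (j + 2 : ℕ) - 2 = j := rfl
        have h2 : (j + 2 : ℕ) - 1 = j + 1 := rfl
        rw [this, h2]
        have : z ^ (j + 1) = z * z ^ j := by ring
        rw [this]
        push_cast
        ring
  have e2 : (- z) * (∑ j ∈ Finset.range (k + 1), lcoef α k j * (-1) ^ j * (j : ℝ) * z ^ (j - 1))
      + (k : ℝ) * (∑ j ∈ Finset.range (k + 1), lcoef α k j * (-1) ^ j * z ^ j)
      = ∑ j ∈ Finset.range (k + 1),
        lcoef α k j * (-1) ^ j * ((k : ℝ) - (j : ℝ)) * z ^ j := by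
    rw [Finset.mul_sum, Finset.mul_sum, ← Finset.sum_add_distrib]
    refine Finset.sum_congr rfl fun j _ => ?_
    match j with
    | 0 => simp; try ring
    | (j + 1) =>
        have h2 : (j + 1 : ℕ) - 1 = j := rfl
        rw [h2]
        have : z ^ (j + 1) = z * z ^ j := by ring
        rw [this]
        push_cast
        ring
  have key : z * (∑ j ∈ Finset.range (k + 1),
        lcoef α k j * (-1) ^ j * (j : ℝ) * ((j - 1 : ℕ) : ℝ) * z ^ (j - 2))
      + (α + 1 - z) * (∑ j ∈ Finset.range (k + 1), lcoef α k j * (-1) ^ j * (j : ℝ) * z ^ (j - 1))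
      + (k : ℝ) * (∑ j ∈ Finset.range (k + 1), lcoef α k j * (-1) ^ j * z ^ j)
      = (∑ j ∈ Finset.range (k + 1),
          lcoef α k j * (-1) ^ j * (j : ℝ) * ((j : ℝ) + α) * z ^ (j - 1))
        + ∑ j ∈ Finset.range (k + 1),
          lcoef α k j * (-1) ^ j * ((k : ℝ) - (j : ℝ)) * z ^ j := by
    rw [← e1, ← e2]; ring
  rw [key]
  -- shift the first sum
  rw [Finset.sum_range_succ' (fun j => lcoef α k j * (-1) ^ j * (j : ℝ) * ((j : ℝ) + α) * z ^ (j - 1)) k]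
  rw [Finset.sum_range_succ (fun j => lcoef α k j * (-1) ^ j * ((k : ℝ) - (j : ℝ)) * z ^ j) k]
  simp only [Nat.cast_zero, mul_zero, zero_mul, add_zero, sub_self, mul_zero, zero_add]
  rw [← Finset.sum_add_distrib]
  refine Finset.sum_eq_zero fun m hm => ?_
  have hmk : m < k := Finset.mem_range.mp hm
  have h2 : (m + 1 : ℕ) - 1 = m := rfl
  rw [h2]
  have hk := lcoef_key hα hmk
  have hcast : ((k - m : ℕ) : ℝ) = (k : ℝ) - m := by
    rw [Nat.cast_sub hmk.le]
  rw [hcast] at hk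
  push_cast
  linear_combination (-((-1:ℝ)^m) * z^m) * hk

end Aux

namespace Aux

lemma contDiff_laguerre (α : ℝ) (k : ℕ) {m : ℕ∞} : ContDiff ℝ m (laguerre α k) := by
  have h : laguerre α k = fun z => ∑ j ∈ Finset.range (k+1), lcoef α k j * (-1)^j * z^j :=
    funext (laguerre_eq α k)
  rw [h]
  apply ContDiff.sum fun j _ => ?_
  exact contDiff_const.mul ((contDiff_id (𝕜 := ℝ)).pow j)

end Aux


theorem coulomb_schrodinger_eigenfunction (d : ℕ) (hd : 2 ≤ d) (Z : ℝ) (hZ : Z ≠ 0) (k n : ℕ)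
    (P : MvPolynomial (Fin d) ℝ) (hhom : P.IsHomogeneous n)
    (hharm : ∀ x, lap (pEval P) x = 0) (x : EuclideanSpace ℝ (Fin d)) (hx : x ≠ 0) :
    -(1 / 2) * lap (fun y => laguerre (2 * (n : ℝ) + (d : ℝ) - 2) k
            ((4 * |Z| / (2 * n + 2 * k + (d : ℝ) - 1)) * ‖y‖) *
          Real.exp (-(4 * |Z| / (2 * n + 2 * k + (d : ℝ) - 1)) * ‖y‖ / 2) *
          pEval P ((4 * |Z| / (2 * n + 2 * k + (d : ℝ) - 1)) • y)) x -
        |Z| / ‖x‖ * (laguerre (2 * (n : ℝ) + (d : ℝ) - 2) k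
            ((4 * |Z| / (2 * n + 2 * k + (d : ℝ) - 1)) * ‖x‖) *
          Real.exp (-(4 * |Z| / (2 * n + 2 * k + (d : ℝ) - 1)) * ‖x‖ / 2) *
          pEval P ((4 * |Z| / (2 * n + 2 * k + (d : ℝ) - 1)) • x))
      = -(2 * Z ^ 2 / (2 * n + 2 * k + (d : ℝ) - 1) ^ 2) *
          (laguerre (2 * (n : ℝ) + (d : ℝ) - 2) k
              ((4 * |Z| / (2 * n + 2 * k + (d : ℝ) - 1)) * ‖x‖) *
            Real.exp (-(4 * |Z| / (2 * n + 2 * k + (d : ℝ) - 1)) * ‖x‖ / 2) *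
            pEval P ((4 * |Z| / (2 * n + 2 * k + (d : ℝ) - 1)) • x)) := by
  classical
  have hd2 : (2:ℝ) ≤ (d:ℝ) := by exact_mod_cast hd
  have hn0 : (0:ℝ) ≤ (n:ℝ) := Nat.cast_nonneg n
  have hk0 : (0:ℝ) ≤ (k:ℝ) := Nat.cast_nonneg k
  obtain ⟨B, hBdef⟩ : ∃ B : ℝ, B = 2 * (n:ℝ) + 2 * (k:ℝ) + (d:ℝ) - 1 := ⟨_, rfl⟩
  rw [← hBdef]
  have hB : 0 < B := by rw [hBdef]; linarith
  have hBne : B ≠ 0 := ne_of_gt hB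
  obtain ⟨κ, hκdef⟩ : ∃ κ : ℝ, κ = 4 * |Z| / B := ⟨_, rfl⟩
  rw [← hκdef]
  have hZ' : 0 < |Z| := abs_pos.mpr hZ
  have hκpos : 0 < κ := by rw [hκdef]; positivity
  obtain ⟨α, hαdef⟩ : ∃ α : ℝ, α = 2 * (n:ℝ) + (d:ℝ) - 2 := ⟨_, rfl⟩
  rw [← hαdef]
  have hα : 0 ≤ α := by rw [hαdef]; linarith
  obtain ⟨f, hfdef⟩ : ∃ f : ℝ → ℝ,
      f = fun t => κ^n * (laguerre α k (κ * t) * Real.exp (-κ * t / 2)) := ⟨_, rfl⟩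
  have hH : ∀ y, ∑ i : Fin d, pEval (MvPolynomial.pderiv i (MvPolynomial.pderiv i P)) y = 0 := by
    intro y; rw [← Aux.lap_pEval]; exact hharm y
  have hpt : ∀ y : EuclideanSpace ℝ (Fin d),
      laguerre α k (κ * ‖y‖) * Real.exp (-κ * ‖y‖ / 2) * pEval P (κ • y)
        = f ‖y‖ * pEval P y := by
    intro y; rw [Aux.pEval_smul hhom, hfdef]; dsimp only; ring
  have hfun : (fun y : EuclideanSpace ℝ (Fin d) => laguerre α k (κ * ‖y‖)
      * Real.exp (-κ * ‖y‖ / 2) * pEval P (κ • y)) = fun y => f ‖y‖ * pEval P y := funext hpt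
  rw [hfun, hpt x]
  have hfC2 : ContDiff ℝ 2 f := by
    rw [hfdef]
    apply ContDiff.mul contDiff_const
    exact ((Aux.contDiff_laguerre α k).comp (contDiff_const.mul contDiff_id)).mul
      (Real.contDiff_exp.comp ((contDiff_const.mul contDiff_id).div_const 2))
  rw [Aux.lap_radial f hfC2 P n hhom hH x hx]
  have hα1 : 2 * (n:ℝ) + (d:ℝ) - 1 = α + 1 := by rw [hαdef]; ring
  rw [hα1]
  obtain ⟨r, hrdef⟩ : ∃ r : ℝ, r = ‖x‖ := ⟨_, rfl⟩
  rw [← hrdef]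
  have hrpos : 0 < r := by rw [hrdef]; exact norm_pos_iff.mpr hx
  have hrne : r ≠ 0 := ne_of_gt hrpos
  have hL : ∀ t : ℝ, HasDerivAt (fun s => laguerre α k (κ * s)) (κ * Aux.lagD α k (κ * t)) t := by
    intro t
    have h1 : HasDerivAt (fun s : ℝ => κ * s) κ t := by
      simpa using (hasDerivAt_id t).const_mul κ
    have h2 := (Aux.hasDerivAt_laguerre α k (κ*t)).comp t h1
    simpa [Function.comp_def, mul_comm] using h2
  have hLD : ∀ t : ℝ, HasDerivAt (fun s => Aux.lagD α k (κ * s)) (κ * Aux.lagD2 α k (κ * t)) t := by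
    intro t
    have h1 : HasDerivAt (fun s : ℝ => κ * s) κ t := by
      simpa using (hasDerivAt_id t).const_mul κ
    have h2 := (Aux.hasDerivAt_lagD α k (κ*t)).comp t h1
    simpa [Function.comp_def, mul_comm] using h2
  have hE : ∀ t : ℝ, HasDerivAt (fun s => Real.exp (-κ * s / 2)) (-κ/2 * Real.exp (-κ * t / 2)) t := by
    intro t
    have h1 : HasDerivAt (fun s : ℝ => -κ * s / 2) (-κ/2) t := by
      simpa using ((hasDerivAt_id t).const_mul (-κ)).div_const 2
    have h2 := (Real.hasDerivAt_exp (-κ*t/2)).comp t h1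
    simpa [Function.comp_def, mul_comm] using h2
  have hf1 : ∀ t : ℝ, HasDerivAt f
      (κ^n * Real.exp (-κ*t/2) * (κ * Aux.lagD α k (κ*t) - κ/2 * laguerre α k (κ*t))) t := by
    intro t
    have H := ((hL t).mul (hE t)).const_mul (κ^n)
    rw [hfdef]
    exact H.congr_deriv (by ring)
  have hderiv1 : deriv f = fun t =>
      κ^n * Real.exp (-κ*t/2) * (κ * Aux.lagD α k (κ*t) - κ/2 * laguerre α k (κ*t)) :=
    funext fun t => (hf1 t).deriv
  have hf2 : ∀ t : ℝ, HasDerivAt (fun t =>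
      κ^n * Real.exp (-κ*t/2) * (κ * Aux.lagD α k (κ*t) - κ/2 * laguerre α k (κ*t)))
      (κ^n * Real.exp (-κ*t/2) * (κ^2 * Aux.lagD2 α k (κ*t) - κ^2 * Aux.lagD α k (κ*t)
        + κ^2/4 * laguerre α k (κ*t))) t := by
    intro t
    have H := (((hE t).const_mul (κ^n)).mul (((hLD t).const_mul κ).sub ((hL t).const_mul (κ/2))))
    exact H.congr_deriv (by simp only [Pi.sub_apply]; ring)
  rw [hderiv1, (hf2 r).deriv]
  beta_reduce
  have hκB : κ * B = 4 * |Z| := by rw [hκdef]; field_simp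
  have hODE := Aux.laguerre_ode hα k (κ * r)
  have hkey : r * (κ^n * Real.exp (-κ*r/2) * (κ^2 * Aux.lagD2 α k (κ*r) - κ^2 * Aux.lagD α k (κ*r)
        + κ^2/4 * laguerre α k (κ*r)))
      + (α + 1) * (κ^n * Real.exp (-κ*r/2) * (κ * Aux.lagD α k (κ*r)
        - κ/2 * laguerre α k (κ*r)))
      = (κ^2/4 * r - 2*|Z|) * (f r) := by
    rw [hfdef]
    dsimp only
    linear_combination (κ^n * Real.exp (-κ*r/2) * κ) * hODE
      - (κ^n * Real.exp (-κ*r/2) * laguerre α k (κ*r) / 2) * hκB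
      + (κ^n * Real.exp (-κ*r/2) * laguerre α k (κ*r) * κ / 2) * hBdef
      - (κ^n * Real.exp (-κ*r/2) * laguerre α k (κ*r) * κ / 2) * hαdef
  have h3 : κ^n * Real.exp (-κ*r/2) * (κ^2 * Aux.lagD2 α k (κ*r) - κ^2 * Aux.lagD α k (κ*r)
        + κ^2/4 * laguerre α k (κ*r))
      + (α + 1) / r * (κ^n * Real.exp (-κ*r/2) * (κ * Aux.lagD α k (κ*r)
        - κ/2 * laguerre α k (κ*r)))
      = (κ^2/4 - 2*|Z|/r) * f r := by
    have e : κ^n * Real.exp (-κ*r/2) * (κ^2 * Aux.lagD2 α k (κ*r) - κ^2 * Aux.lagD α k (κ*r)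
        + κ^2/4 * laguerre α k (κ*r))
      + (α + 1) / r * (κ^n * Real.exp (-κ*r/2) * (κ * Aux.lagD α k (κ*r)
        - κ/2 * laguerre α k (κ*r)))
      = (r * (κ^n * Real.exp (-κ*r/2) * (κ^2 * Aux.lagD2 α k (κ*r) - κ^2 * Aux.lagD α k (κ*r)
        + κ^2/4 * laguerre α k (κ*r)))
      + (α + 1) * (κ^n * Real.exp (-κ*r/2) * (κ * Aux.lagD α k (κ*r)
        - κ/2 * laguerre α k (κ*r)))) / r := by
      field_simp
      try ring
    rw [e, hkey]
    field_simp
    try ring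
  rw [h3]
  have hκ2 : κ^2 * B^2 = 16 * Z^2 := by
    linear_combination (κ * B + 4*|Z|) * hκB + 16 * (sq_abs Z)
  have h8 : κ^2 = 16 * Z^2 / B^2 := by
    rw [eq_div_iff (pow_ne_zero 2 hBne)]; exact hκ2
  rw [h8]
  field_simp
  ring
end
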